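/- Let M be a substochastic matrix such that for every index i, either row i has sum strictly less than 1, or there exists a sink node k* and m ≥ 1 with (M^m)_{i k*} > 0. Then M^t → 0 as t → ∞. -/

import Mathlib

open Filter

/-- If M is substochastic and every node either is a sink node or
is reachable from a sink node (some power has a positive entry connecting them),
then M^t → 0. -/
theorem stmt_10 (q : ℕ) (M : Matrix (Fin q) (Fin q) ℝ)
    (hnonneg : ∀ i j, 0 ≤ M i j)
    (hsub : ∀ i, ∑ j, M i j ≤ 1)
    (hreach : ∀ i : Fin q, (∑ j, M i j < 1) ∨
      ∃ (k : Fin q) (m : ℕ), 1 ≤ m ∧ (∑ j, M k j < 1) ∧ 0 < (M ^ m) i k) :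
    Tendsto (fun t => M ^ t) atTop (nhds 0) := by
  rcases Nat.eq_zero_or_pos q with hq | hq
  · subst hq
    have h0 : ∀ t : ℕ, M ^ t = 0 := fun t => Subsingleton.elim _ _
    simp only [h0]
    exact tendsto_const_nhds
  have he : (Finset.univ : Finset (Fin q)).Nonempty := ⟨⟨0, hq⟩, Finset.mem_univ _⟩
  -- nonnegativity of powers
  have hPnn : ∀ t (i j : Fin q), 0 ≤ (M ^ t) i j := by
    intro t
    induction t with
    | zero =>
      intro i j
      rw [pow_zero]
      by_cases h : i = j <;> simp [Matrix.one_apply, h]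
    | succ n ih =>
      intro i j
      rw [pow_succ, Matrix.mul_apply]
      exact Finset.sum_nonneg fun k _ => mul_nonneg (ih i k) (hnonneg k j)
  set s : ℕ → Fin q → ℝ := fun t i => ∑ j, (M ^ t) i j with hs
  have hsnn : ∀ t i, 0 ≤ s t i := fun t i =>
    Finset.sum_nonneg fun j _ => hPnn t i j
  have hs1 : ∀ k, s 1 k = ∑ j, M k j := by intro k; simp [hs, pow_one]
  have hkey : ∀ a b i, s (a + b) i = ∑ k, (M ^ a) i k * s b k := by
    intro a b i
    simp only [hs, pow_add, Matrix.mul_apply]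
    rw [Finset.sum_comm]
    simp [Finset.mul_sum]
  have hs0 : ∀ i, s 0 i = 1 := by
    intro i
    simp [hs, Matrix.one_apply]
  have hanti : ∀ i, Antitone fun t => s t i := by
    intro i
    apply antitone_nat_of_succ_le
    intro t
    have : s (t + 1) i = ∑ k, (M ^ t) i k * s 1 k := hkey t 1 i
    rw [this]
    calc ∑ k, (M ^ t) i k * s 1 k ≤ ∑ k, (M ^ t) i k * 1 := by
          apply Finset.sum_le_sum
          intro k _
          exact mul_le_mul_of_nonneg_left ((hs1 k) ▸ hsub k) (hPnn t i k)
      _ = s t i := by simp [hs]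
  have hsle1 : ∀ t i, s t i ≤ 1 := by
    intro t i
    calc s t i ≤ s 0 i := hanti i (Nat.zero_le t)
      _ = 1 := hs0 i
  -- every row eventually has sum < 1
  have hev : ∀ i, ∃ m, 1 ≤ m ∧ s m i < 1 := by
    intro i
    rcases hreach i with h | ⟨k, m, hm, hk, hpos⟩
    · exact ⟨1, le_refl 1, by rw [hs1]; exact h⟩
    · refine ⟨m + 1, Nat.le_add_left 1 m, ?_⟩
      have h1 : s (m + 1) i = ∑ l, (M ^ m) i l * s 1 l := hkey m 1 i
      have h2 : ∑ l, (M ^ m) i l * s 1 l < ∑ l, (M ^ m) i l * 1 := by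
        apply Finset.sum_lt_sum
        · intro l _
          exact mul_le_mul_of_nonneg_left ((hs1 l) ▸ hsub l) (hPnn m i l)
        · refine ⟨k, Finset.mem_univ k, ?_⟩
          have : s 1 k < 1 := by rw [hs1]; exact hk
          calc (M ^ m) i k * s 1 k < (M ^ m) i k * 1 :=
                (mul_lt_mul_iff_right₀ hpos).2 this
            _ = (M ^ m) i k * 1 := rfl
        
      have h3 : (∑ l, (M ^ m) i l * 1) = s m i := by simp [hs]
      rw [h1]
      calc ∑ l, (M ^ m) i l * s 1 l < ∑ l, (M ^ m) i l * 1 := h2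
        _ = s m i := h3
        _ ≤ 1 := hsle1 m i
  choose g hg1 hg2 using hev
  set N : ℕ := Finset.univ.sup g with hN
  have hNpos : 0 < N := lt_of_lt_of_le (hg1 ⟨0, hq⟩) (Finset.le_sup (Finset.mem_univ _))
  have hsN : ∀ i, s N i < 1 := fun i =>
    lt_of_le_of_lt (hanti i (Finset.le_sup (Finset.mem_univ i))) (hg2 i)
  set f : ℕ → ℝ := fun t => Finset.univ.sup' he (s t) with hf
  have hfle : ∀ t i, s t i ≤ f t := fun t i => Finset.le_sup' (s t) (Finset.mem_univ i)
  have hfnn : ∀ t, 0 ≤ f t := fun t => le_trans (hsnn t ⟨0, hq⟩) (hfle t ⟨0, hq⟩)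
  set c : ℝ := f N with hc
  have hc1 : c < 1 := (Finset.sup'_lt_iff he).2 fun i _ => hsN i
  have hc0 : 0 ≤ c := hfnn N
  have hfsub : ∀ a b, f (a + b) ≤ f a * f b := by
    intro a b
    apply Finset.sup'_le
    intro i _
    rw [hkey a b i]
    calc ∑ k, (M ^ a) i k * s b k ≤ ∑ k, (M ^ a) i k * f b := by
          apply Finset.sum_le_sum
          intro k _
          exact mul_le_mul_of_nonneg_left (hfle b k) (hPnn a i k)
      _ = s a i * f b := by rw [← Finset.sum_mul]
      _ ≤ f a * f b := mul_le_mul_of_nonneg_right (hfle a i) (hfnn b)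
  have hfanti : Antitone f := by
    apply antitone_nat_of_succ_le
    intro t
    apply Finset.sup'_le
    intro i _
    exact le_trans (hanti i (Nat.le_succ t)) (hfle t i)
  have hfpow : ∀ k : ℕ, f (k * N) ≤ c ^ k := by
    intro k
    induction k with
    | zero =>
      simp only [Nat.zero_mul, pow_zero]
      exact Finset.sup'_le he _ fun i _ => hsle1 0 i
    | succ n ih =>
      have : (n + 1) * N = n * N + N := by ring
      rw [this, pow_succ]
      calc f (n * N + N) ≤ f (n * N) * f N := hfsub (n * N) N
        _ ≤ c ^ n * c := mul_le_mul ih (le_refl _) (hfnn N) (pow_nonneg hc0 n)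
  have hbound : ∀ t (i j : Fin q), (M ^ t) i j ≤ c ^ (t / N) := by
    intro t i j
    have h1 : (M ^ t) i j ≤ s t i :=
      Finset.single_le_sum (fun l _ => hPnn t i l) (Finset.mem_univ j)
    have h2 : s t i ≤ f t := hfle t i
    have h3 : f t ≤ f (t / N * N) := hfanti (Nat.div_mul_le_self t N)
    exact le_trans h1 (le_trans h2 (le_trans h3 (hfpow (t / N))))
  have hdiv : Tendsto (fun t : ℕ => t / N) atTop atTop := by
    apply tendsto_atTop_atTop.2
    intro b
    exact ⟨b * N, fun a ha => (Nat.le_div_iff_mul_le hNpos).2 ha⟩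
  have htend : Tendsto (fun t : ℕ => c ^ (t / N)) atTop (nhds 0) :=
    (tendsto_pow_atTop_nhds_zero_of_lt_one hc0 hc1).comp hdiv
  apply tendsto_pi_nhds.2
  intro i
  rw [tendsto_pi_nhds]
  intro j
  exact squeeze_zero (fun t => hPnn t i j) (fun t => hbound t i j) htend
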